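/- For all integers m ≥ 2 and x ≥ 1 and every codeword c ∈ C(m,x) whose leftmost bit c_{m−1} equals 1, the balanced index g^b(c) := N(m,x) − 1 − g(c) satisfies 2·g^b(c) = Σ_{i=0}^{m−2} N(i−x+1, x)·[c_i = 0], where the sum ranges over the positions i < m−1 with c_i = 0 and any term N(k,x) with k ≤ 1 is interpreted, by convention, as 2. -/

import Mathlib

attribute [local instance 10] Classical.propDecidable

/-- `noForbidden m x c` says the binary word `c = (c_{m-1}, …, c_0)` contains no contiguous
subword of the form `0 1^y 0` or `1 0^y 1` for any `1 ≤ y ≤ x`. -/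
def noForbidden (m x : ℕ) (c : Fin m → Bool) : Prop :=
  ∀ j y : ℕ, 1 ≤ y → y ≤ x → (h : j + y + 1 < m) →
    ¬ ((∀ k, 1 ≤ k → (hk : k ≤ y) → c ⟨j + k, by omega⟩ = ! c ⟨j, by omega⟩) ∧
        c ⟨j + y + 1, h⟩ = c ⟨j, by omega⟩)

def bitf (m : ℕ) (d : Fin m → Bool) : ℕ → Bool := fun n => if h : n < m then d ⟨n, h⟩ else false

lemma bitf_eq {m : ℕ} (d : Fin m → Bool) {n : ℕ} (hn : n < m) : bitf m d n = d ⟨n, hn⟩ := by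
  simp [bitf, hn]

def V (x m : ℕ) (c : ℕ → Bool) : Prop :=
  ∀ p k, 1 ≤ k → k ≤ x → p + 1 + k < m → c p ≠ c (p+1) → c (p+1+k) = c (p+1)

lemma V_congr {x m : ℕ} {c c' : ℕ → Bool} (h : ∀ n < m, c n = c' n) (hc : V x m c) :
    V x m c' := by
  intro p k h1 h2 h3 h4
  rw [← h (p+1+k) (by omega), ← h (p+1) (by omega)]
  exact hc p k h1 h2 h3 (by rw [h p (by omega), h (p+1) (by omega)]; exact h4)


lemma V_of_le {x m m' : ℕ} {c : ℕ → Bool} (h : m' ≤ m) (hc : V x m c) : V x m' c := by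
  intro p k h1 h2 h3 h4
  exact hc p k h1 h2 (by omega) h4

lemma noForbidden_iff_V {m x : ℕ} (c : Fin m → Bool) :
    noForbidden m x c ↔ V x m (bitf m c) := by
  constructor
  · intro h p k h1 h2 h3 h4
    induction k using Nat.strong_induction_on with
    | _ k ih =>
      by_contra hne
      apply h p k h1 h2 (by omega)
      have hb : bitf m c (p+1) = ! bitf m c p := by
        revert h4; cases (bitf m c p) <;> cases (bitf m c (p+1)) <;> simp
      constructor
      · intro k' hk1 hk2
        rw [← bitf_eq c (show p + k' < m by omega), ← bitf_eq c (show p < m by omega)]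
        rcases Nat.eq_or_lt_of_le hk1 with h'|h'
        · rw [← h']; exact hb
        · have := ih (k'-1) (by omega) (by omega) (by omega) (by omega)
          rw [show p + k' = p + 1 + (k'-1) by omega, this]; exact hb
      · rw [← bitf_eq c (show p + k + 1 < m by omega), ← bitf_eq c (show p < m by omega),
          show p + k + 1 = p + 1 + k by omega]
        rw [hb] at hne
        revert hne; cases (bitf m c p) <;> cases (bitf m c (p+1+k)) <;> simp
  · intro h j y h1 h2 h3 ⟨hmid, hend⟩
    have hmid' : ∀ k, 1 ≤ k → k ≤ y → bitf m c (j + k) = ! bitf m c j := by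
      intro k hk1 hk2
      rw [bitf_eq c (show j + k < m by omega), bitf_eq c (show j < m by omega)]
      exact hmid k hk1 hk2
    have hend' : bitf m c (j + y + 1) = bitf m c j := by
      rw [bitf_eq c h3, bitf_eq c (show j < m by omega)]; exact hend
    have hflip : bitf m c j ≠ bitf m c (j+1) := by
      rw [hmid' 1 le_rfl h1]; cases (bitf m c j) <;> simp
    have := h j y h1 h2 (by omega) hflip
    rw [show j + 1 + y = j + y + 1 by omega, hend', hmid' 1 le_rfl h1] at this
    revert this; cases (bitf m c j) <;> simp

lemma V_small {x m : ℕ} (h : m ≤ 1) (c : ℕ → Bool) : V x m c := fun _ _ _ _ h3 => by omega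

noncomputable def Fc (x n : ℕ) : ℕ :=
  Nat.card {v : Fin (n+1) → Bool // V x (n+1) (bitf (n+1) v) ∧ bitf (n+1) v n = true}

lemma ncard_filter {α : Type*} [Fintype α] (P : α → Prop) [DecidablePred P] :
    Nat.card {a // P a} = (Finset.univ.filter P).card := by
  rw [Nat.card_eq_fintype_card, Fintype.card_subtype]

lemma Fc_eq (x n : ℕ) (inst : DecidablePred
      (fun v : Fin (n+1) → Bool => V x (n+1) (bitf (n+1) v) ∧ bitf (n+1) v n = true)) :
    Fc x n = (Finset.univ.filter
      (fun v : Fin (n+1) → Bool => V x (n+1) (bitf (n+1) v) ∧ bitf (n+1) v n = true)).card :=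
  ncard_filter _

lemma Fc_zero (x : ℕ) : Fc x 0 = 1 := by
  rw [Fc_eq _ _ inferInstance]
  rw [show (Finset.univ.filter
      (fun v : Fin 1 → Bool => V x 1 (bitf 1 v) ∧ bitf 1 v 0 = true)) = {fun _ => true} from ?_]
  · simp
  · ext v
    simp only [Finset.mem_filter, Finset.mem_univ, true_and, Finset.mem_singleton]
    constructor
    · rintro ⟨-, h⟩
      funext i
      have : i = ⟨0, by omega⟩ := by ext; omega
      rw [this]; rw [bitf_eq v (by omega)] at h; exact h
    · rintro rfl
      exact ⟨V_small le_rfl _, by rw [bitf_eq _ (by omega)]⟩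

def cpl {m : ℕ} (d : Fin m → Bool) : Fin m → Bool := fun i => !d i

lemma cpl_cpl {m : ℕ} (d : Fin m → Bool) : cpl (cpl d) = d := by
  funext i; simp [cpl]

lemma bitf_cpl {m : ℕ} (d : Fin m → Bool) {n : ℕ} (hn : n < m) :
    bitf m (cpl d) n = ! bitf m d n := by
  rw [bitf_eq _ hn, bitf_eq _ hn]; rfl

lemma V_cpl {x m : ℕ} {d : Fin m → Bool} (h : V x m (bitf m d)) : V x m (bitf m (cpl d)) := by
  apply V_congr (c := fun n => ! bitf m d n)
  · intro n hn; rw [bitf_cpl d hn]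
  · intro p k h1 h2 h3 h4
    dsimp only at h4 ⊢
    have h4' : bitf m d p ≠ bitf m d (p+1) := by
      intro he; apply h4; rw [he]
    rw [h p k h1 h2 h3 h4']

lemma card_cpl {m : ℕ} (P Q : (Fin m → Bool) → Prop) [DecidablePred P] [DecidablePred Q]
    (h1 : ∀ d, P d → Q (cpl d)) (h2 : ∀ d, Q d → P (cpl d)) :
    (Finset.univ.filter P).card = (Finset.univ.filter Q).card := by
  apply Finset.card_bij' (fun d _ => cpl d) (fun d _ => cpl d)
  · intro a ha; simp only [Finset.mem_filter, Finset.mem_univ, true_and] at ha ⊢; exact h1 a ha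
  · intro a ha; simp only [Finset.mem_filter, Finset.mem_univ, true_and] at ha ⊢; exact h2 a ha
  · intro a _; exact cpl_cpl a
  · intro a _; exact cpl_cpl a

lemma card_split {m : ℕ} (P Q : (Fin m → Bool) → Prop) [DecidablePred P] [DecidablePred Q]
    [DecidablePred (fun d => P d ∧ Q d)] [DecidablePred (fun d => P d ∧ ¬ Q d)] :
    (Finset.univ.filter P).card
      = (Finset.univ.filter fun d => P d ∧ Q d).card
        + (Finset.univ.filter fun d => P d ∧ ¬ Q d).card := by
  have hu : Finset.univ.filter P
      = (Finset.univ.filter fun d => P d ∧ Q d) ∪ (Finset.univ.filter fun d => P d ∧ ¬ Q d) := by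
    ext d
    simp only [Finset.mem_filter, Finset.mem_univ, true_and, Finset.mem_union]
    tauto
  rw [hu, Finset.card_union_of_disjoint]
  rw [Finset.disjoint_left]
  intro a ha hb
  simp only [Finset.mem_filter, Finset.mem_univ, true_and] at ha hb
  tauto

lemma codes_card (x n : ℕ) :
    (Finset.univ.filter (fun d : Fin (n+1) → Bool => V x (n+1) (bitf (n+1) d))).card
      = 2 * Fc x n := by
  rw [card_split (fun d : Fin (n+1) → Bool => V x (n+1) (bitf (n+1) d))
    (fun d => bitf (n+1) d n = true)]
  have : (Finset.univ.filter fun d : Fin (n+1) → Bool =>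
      V x (n+1) (bitf (n+1) d) ∧ ¬ bitf (n+1) d n = true).card = Fc x n := by
    rw [Fc_eq _ _ inferInstance]
    apply card_cpl
    · rintro d ⟨hv, ht⟩
      refine ⟨V_cpl hv, ?_⟩
      rw [bitf_cpl d (by omega)]
      revert ht; cases (bitf (n+1) d n) <;> simp
    · rintro d ⟨hv, ht⟩
      refine ⟨V_cpl hv, ?_⟩
      rw [bitf_cpl d (by omega)]
      revert ht; cases (bitf (n+1) d n) <;> simp
  rw [this]
  have : (Finset.univ.filter fun d : Fin (n+1) → Bool =>
      V x (n+1) (bitf (n+1) d) ∧ bitf (n+1) d n = true).card = Fc x n :=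
    (Fc_eq _ _ inferInstance).symm
  rw [this]; ring

/-! E-sets: codewords matching a context `c` above position `i`, with bit `i` equal to one. -/

def EP (x m i : ℕ) (c : Fin m → Bool) (d : Fin m → Bool) : Prop :=
  V x m (bitf m d) ∧ bitf m d i = true ∧ ∀ j, i < j → j < m → bitf m d j = bitf m c j

noncomputable def Ec (x m i : ℕ) (c : Fin m → Bool) : ℕ := Nat.card {d // EP x m i c d}

lemma Ec_eq (x m i : ℕ) (c : Fin m → Bool) :
    Ec x m i c = (Finset.univ.filter (EP x m i c)).card := ncard_filter _

/-- B0: if the zero-run above `i` is short and capped by a one, the E-set is empty. -/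
lemma Ec_zero {x m i : ℕ} (c : Fin m → Bool) (t : ℕ) (ht1 : 1 ≤ t) (htx : t ≤ x)
    (hm : i + t + 1 < m) (hmid : ∀ k, 1 ≤ k → k ≤ t → bitf m c (i+k) = false)
    (hend : bitf m c (i+t+1) = true) : Ec x m i c = 0 := by
  unfold Ec
  rw [Nat.card_eq_zero]
  left
  constructor
  rintro ⟨d, hv, hd, hmatch⟩
  have h1 : bitf m d (i+1) = false := by
    rw [hmatch (i+1) (by omega) (by omega)]; exact hmid 1 le_rfl ht1
  have hflip : bitf m d i ≠ bitf m d (i+1) := by rw [hd, h1]; simp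
  have := hv i t ht1 htx (by omega) hflip
  rw [h1, hmatch (i+1+t) (by omega) (by omega), show i+1+t = i+t+1 by omega, hend] at this
  exact Bool.noConfusion this

/-- B1: context bit above `i` is one (and either `c i = 0` or everything above is ones). -/
lemma Ec_top {x m i : ℕ} (c : Fin m → Bool) (him : i + 1 < m) (hc : V x m (bitf m c))
    (ht : bitf m c (i+1) = true)
    (hside : bitf m c i = false ∨ ∀ q, i < q → q < m → bitf m c q = true) :
    Ec x m i c = Fc x i := by
  rw [Ec_eq, Fc, ncard_filter]
  apply Finset.card_bij'
    (i := fun (d : Fin m → Bool) (_ : d ∈ Finset.univ.filter (EP x m i c)) =>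
      (fun j : Fin (i+1) => d ⟨(j : ℕ), Nat.lt_trans j.isLt him⟩))
    (j := fun (v : Fin (i+1) → Bool) _ =>
      (fun j : Fin m => if h : (j : ℕ) < i + 1 then v ⟨(j : ℕ), h⟩ else c j))
  · -- forward membership
    intro d hd
    simp only [Finset.mem_filter, Finset.mem_univ, true_and, EP] at hd ⊢
    obtain ⟨hv, hdi, hmatch⟩ := hd
    have hb : ∀ n < i + 1,
        bitf (i+1) (fun j : Fin (i+1) => d ⟨(j : ℕ), Nat.lt_trans j.isLt him⟩) n
        = bitf m d n := by
      intro n hn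
      rw [bitf_eq _ hn, bitf_eq _ (show n < m by omega)]
    constructor
    · exact V_congr (fun n hn => (hb n hn).symm) (V_of_le (by omega) hv)
    · rw [hb i (by omega)]; exact hdi
  · -- backward membership
    intro v hv
    simp only [Finset.mem_filter, Finset.mem_univ, true_and, EP] at hv ⊢
    obtain ⟨hvv, hvt⟩ := hv
    set g : Fin m → Bool := fun j : Fin m => if h : (j : ℕ) < i + 1 then v ⟨(j : ℕ), h⟩ else c j
      with hgdef
    have hG1 : ∀ n (hn : n < i + 1), bitf m g n = bitf (i+1) v n := by
      intro n hn
      rw [bitf_eq _ (show n < m by omega), bitf_eq _ hn, hgdef]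
      simp [hn]
    have hG2 : ∀ n, i < n → bitf m g n = bitf m c n := by
      intro n hn
      by_cases h : n < m
      · rw [bitf_eq _ h, bitf_eq _ h, hgdef]
        simp [show ¬ (n < i + 1) by omega]
      · simp [bitf, h]
    have hgi : bitf m g i = true := by rw [hG1 i (by omega)]; exact hvt
    refine ⟨?_, hgi, fun j hj _ => hG2 j hj⟩
    -- validity of the glued word
    intro p k h1 h2 h3 h4
    have hVlow : V x (i+1) (bitf m g) :=
      V_congr (fun n hn => (hG1 n hn).symm) (V_congr (fun n _ => rfl) hvv)
    rcases lt_or_ge (p+1+k) (i+1) with hq | hq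
    · exact hVlow p k h1 h2 hq h4
    rcases le_or_gt (i+1) p with hp | hp
    · rw [hG2 p (by omega), hG2 (p+1) (by omega)] at h4
      rw [hG2 (p+1+k) (by omega), hG2 (p+1) (by omega)]
      exact hc p k h1 h2 h3 h4
    rcases Nat.eq_or_lt_of_le (show p ≤ i by omega) with hpi | hpi
    · -- p = i : both g p and g (p+1) are true, contradiction
      exfalso
      apply h4
      have e1 : bitf m g p = true := by rw [hpi]; exact hgi
      have e2 : bitf m g (p+1) = true := by
        rw [hG2 (p+1) (by omega), hpi]; exact ht
      rw [e1, e2]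
    · -- p < i < p+1+k
      have hchain : ∀ t', p + 1 ≤ t' → t' ≤ i → bitf m g t' = bitf m g (p+1) := by
        intro t' ht1' ht2'
        rcases Nat.eq_or_lt_of_le ht1' with h' | h'
        · rw [← h']
        · have := hVlow p (t' - (p+1)) (by omega) (by omega) (by omega) h4
          rw [show p + 1 + (t' - (p+1)) = t' by omega] at this
          exact this
      have hp1 : bitf m g (p+1) = true := by
        rw [← hchain i (by omega) (by omega)]; exact hgi
      rw [hp1]
      rcases Nat.eq_or_lt_of_le (show i + 1 ≤ p+1+k by omega) with hq' | hq'
      · rw [hG2 (p+1+k) (by omega), ← hq']; exact ht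
      · rw [hG2 (p+1+k) (by omega)]
        rcases hside with hA | hB
        · have hcflip : bitf m c i ≠ bitf m c (i+1) := by rw [hA, ht]; simp
          have := hc i (p+1+k - (i+1)) (by omega) (by omega) (by omega) hcflip
          rw [show i + 1 + (p+1+k-(i+1)) = p+1+k by omega, ht] at this
          exact this
        · exact hB (p+1+k) (by omega) (by omega)
  · -- left inverse : glue (res d) = d
    intro d hd
    simp only [Finset.mem_filter, Finset.mem_univ, true_and, EP] at hd
    obtain ⟨-, -, hmatch⟩ := hd
    funext j
    by_cases h : (j : ℕ) < i + 1
    · simp [h]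
    · simp only [h, dif_neg, not_false_iff]
      have := hmatch (j : ℕ) (by omega) j.isLt
      rw [bitf_eq _ j.isLt, bitf_eq _ j.isLt] at this
      simp only [Fin.eta] at this
      exact this.symm
  · -- right inverse : res (glue v) = v
    intro v _
    funext j
    simp [j.isLt]

/-- Forced ones: in the deep-zero context, bits `i-x .. i` of any member are forced to one. -/
lemma forced_ones {x m i : ℕ} (c : Fin m → Bool) (him : i + 1 < m)
    (hz1 : bitf m c (i+1) = false) {d : Fin m → Bool} (hv : V x m (bitf m d))
    (hdi : bitf m d i = true) (hmatch : ∀ j, i < j → j < m → bitf m d j = bitf m c j) :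
    ∀ t, i - x ≤ t → t ≤ i → bitf m d t = true := by
  suffices h : ∀ n t, i - t = n → i - x ≤ t → t ≤ i → bitf m d t = true from
    fun t ht1 ht2 => h (i-t) t rfl ht1 ht2
  intro n
  induction n with
  | zero =>
    intro t hn ht1 ht2
    have : t = i := by omega
    rw [this]; exact hdi
  | succ n ih =>
    intro t hn ht1 ht2
    have hnext : bitf m d (t+1) = true := ih (t+1) (by omega) (by omega) (by omega)
    by_contra hft
    have hft' : bitf m d t = false := by revert hft; cases (bitf m d t) <;> simp
    have hflip : bitf m d t ≠ bitf m d (t+1) := by rw [hft', hnext]; simp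
    have := hv t (i - t) (by omega) (by omega) (by omega) hflip
    rw [show t + 1 + (i - t) = i + 1 by omega, hnext, hmatch (i+1) (by omega) (by omega), hz1]
      at this
    exact Bool.noConfusion this

/-- B2: context has a deep run of zeros (length `≥ x+1`, truncated at `m`) above `i`. -/
lemma Ec_deep {x m i : ℕ} (c : Fin m → Bool) (him : i + 1 < m) (hc : V x m (bitf m c))
    (hz : ∀ k, 1 ≤ k → k ≤ x + 1 → i + k < m → bitf m c (i+k) = false) :
    Ec x m i c = Fc x (i - x) := by
  have hz1 : bitf m c (i+1) = false := hz 1 le_rfl (by omega) (by omega)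
  have hLm : i - x + 1 < m := by omega
  rw [Ec_eq, Fc, ncard_filter]
  apply Finset.card_bij'
    (i := fun (d : Fin m → Bool) (_ : d ∈ Finset.univ.filter (EP x m i c)) =>
      (fun j : Fin (i - x + 1) => d ⟨(j : ℕ), Nat.lt_trans j.isLt hLm⟩))
    (j := fun (v : Fin (i - x + 1) → Bool) _ =>
      (fun j : Fin m => if h : (j : ℕ) < i - x + 1 then v ⟨(j : ℕ), h⟩
        else if (j : ℕ) ≤ i then true else c j))
  · -- forward membership
    intro d hd
    simp only [Finset.mem_filter, Finset.mem_univ, true_and, EP] at hd ⊢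
    obtain ⟨hv, hdi, hmatch⟩ := hd
    have hb : ∀ n < i - x + 1,
        bitf (i - x + 1) (fun j : Fin (i - x + 1) => d ⟨(j : ℕ), Nat.lt_trans j.isLt hLm⟩) n
        = bitf m d n := by
      intro n hn
      rw [bitf_eq _ hn, bitf_eq _ (show n < m by omega)]
    constructor
    · exact V_congr (fun n hn => (hb n hn).symm) (V_of_le (by omega) hv)
    · rw [hb (i - x) (by omega)]
      exact forced_ones c him hz1 hv hdi hmatch (i - x) le_rfl (by omega)
  · -- backward membership
    intro v hv
    simp only [Finset.mem_filter, Finset.mem_univ, true_and, EP] at hv ⊢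
    obtain ⟨hvv, hvt⟩ := hv
    set g : Fin m → Bool := fun j : Fin m => if h : (j : ℕ) < i - x + 1 then v ⟨(j : ℕ), h⟩
      else if (j : ℕ) ≤ i then true else c j with hgdef
    have hG1 : ∀ n (hn : n < i - x + 1), bitf m g n = bitf (i - x + 1) v n := by
      intro n hn
      rw [bitf_eq _ (show n < m by omega), bitf_eq _ hn, hgdef]
      simp [hn]
    have hG2 : ∀ n, i - x ≤ n → n ≤ i → bitf m g n = true := by
      intro n hn1 hn2
      rcases Nat.eq_or_lt_of_le hn1 with h' | h'
      · rw [hG1 n (by omega), ← h']; exact hvt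
      · rw [bitf_eq _ (show n < m by omega), hgdef]
        simp [show ¬ (n < i - x + 1) by omega, show n ≤ i from hn2]
    have hG3 : ∀ n, i < n → bitf m g n = bitf m c n := by
      intro n hn
      by_cases h : n < m
      · rw [bitf_eq _ h, bitf_eq _ h, hgdef]
        simp [show ¬ (n < i - x + 1) by omega, show ¬ (n ≤ i) by omega]
      · simp [bitf, h]
    have hgi : bitf m g i = true := hG2 i (by omega) le_rfl
    refine ⟨?_, hgi, fun j hj _ => hG3 j hj⟩
    intro p k h1 h2 h3 h4
    have hVlow : V x (i - x + 1) (bitf m g) :=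
      V_congr (fun n hn => (hG1 n hn).symm) (V_congr (fun n _ => rfl) hvv)
    rcases lt_or_ge (p+1+k) (i - x + 1) with hq | hq
    · exact hVlow p k h1 h2 hq h4
    rcases le_or_gt (i+1) p with hp | hp
    · rw [hG3 p (by omega), hG3 (p+1) (by omega)] at h4
      rw [hG3 (p+1+k) (by omega), hG3 (p+1) (by omega)]
      exact hc p k h1 h2 h3 h4
    rcases Nat.eq_or_lt_of_le (show p ≤ i by omega) with hpi | hpi
    · -- p = i : flip into the zero region
      have e2 : bitf m g (p+1) = false := by rw [hG3 (p+1) (by omega), hpi]; exact hz1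
      rw [e2, hG3 (p+1+k) (by omega), hpi]
      rw [show i + 1 + k = i + (k+1) by omega]
      exact hz (k+1) (by omega) (by omega) (by omega)
    · -- p < i
      rcases le_or_gt (i - x) p with hmid | hlow
      · -- p in the forced-one region: no flip
        exfalso
        exact h4 ((hG2 p hmid (by omega)).trans (hG2 (p+1) (by omega) (by omega)).symm)
      · -- p below i-x : chain within v up to i-x, target inside forced-one region
        have hxlt : x < i := by omega
        have hchain : ∀ t', p + 1 ≤ t' → t' ≤ i - x → bitf m g t' = bitf m g (p+1) := by
          intro t' ht1' ht2'
          rcases Nat.eq_or_lt_of_le ht1' with h' | h'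
          · rw [← h']
          · have := hVlow p (t' - (p+1)) (by omega) (by omega) (by omega) h4
            rw [show p + 1 + (t' - (p+1)) = t' by omega] at this
            exact this
        have hp1 : bitf m g (p+1) = true := by
          rw [← hchain (i - x) (by omega) le_rfl]
          exact hG2 (i - x) le_rfl (by omega)
        rw [hp1]
        exact hG2 (p+1+k) (by omega) (by omega)
  · -- left inverse
    intro d hd
    simp only [Finset.mem_filter, Finset.mem_univ, true_and, EP] at hd
    obtain ⟨hv, hdi, hmatch⟩ := hd
    funext j
    by_cases h : (j : ℕ) < i - x + 1
    · simp [h]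
    · by_cases h' : (j : ℕ) ≤ i
      · simp only [h, dif_neg, not_false_iff, h', if_pos]
        have := forced_ones c him hz1 hv hdi hmatch (j : ℕ) (by omega) h'
        rw [bitf_eq _ j.isLt] at this
        simp only [Fin.eta] at this
        exact this.symm
      · simp only [h, dif_neg, not_false_iff, h', if_neg]
        have := hmatch (j : ℕ) (by omega) j.isLt
        rw [bitf_eq _ j.isLt, bitf_eq _ j.isLt] at this
        simp only [Fin.eta] at this
        exact this.symm
  · -- right inverse
    intro v _
    funext j
    simp [j.isLt]

lemma V_const {x m : ℕ} (b : Bool) : V x m (bitf m (fun _ => b)) := by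
  intro p k h1 h2 h3 h4
  exfalso
  apply h4
  rw [bitf_eq _ (show p < m by omega), bitf_eq _ (show p + 1 < m by omega)]

lemma Fc_rec (x n : ℕ) : Fc x (n+1) = Fc x n + Fc x (n - x) := by
  have base : Fc x (n+1) = (Finset.univ.filter
      (fun v : Fin (n+2) → Bool => V x (n+2) (bitf (n+2) v) ∧ bitf (n+2) v (n+1) = true)).card :=
    ncard_filter _
  rw [base, card_split _ (fun d : Fin (n+2) → Bool => bitf (n+2) d n = true)]
  congr 1
  · -- ones branch
    rw [show Fc x n = Ec x (n+2) n (fun _ => true) from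
      (Ec_top (fun _ => true) (by omega) (V_const true)
        (by rw [bitf_eq _ (by omega)]) (Or.inr (fun q _ hq => by rw [bitf_eq _ hq]))).symm]
    rw [Ec_eq]
    congr 1
    apply Finset.filter_congr
    intro d _
    unfold EP
    constructor
    · rintro ⟨⟨hv, ht⟩, hn⟩
      refine ⟨hv, hn, fun j hj1 hj2 => ?_⟩
      have : j = n + 1 := by omega
      rw [this, ht, bitf_eq _ (by omega)]
    · rintro ⟨hv, hn, hmatch⟩
      exact ⟨⟨hv, by rw [hmatch (n+1) (by omega) (by omega), bitf_eq _ (by omega)]⟩, hn⟩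
  · -- zeros branch
    rw [show Fc x (n - x) = Ec x (n+2) n (fun _ => false) from
      (Ec_deep (fun _ => false) (by omega) (V_const false)
        (fun k _ _ hk => by rw [bitf_eq _ hk])).symm]
    rw [Ec_eq]
    apply card_cpl
    · rintro d ⟨⟨hv, ht⟩, hn⟩
      refine ⟨V_cpl hv, ?_, fun j hj1 hj2 => ?_⟩
      · rw [bitf_cpl _ (show n < n + 2 by omega)]
        revert hn; cases (bitf (n+2) d n) <;> simp
      · have : j = n + 1 := by omega
        rw [this, bitf_cpl _ (show n + 1 < n + 2 by omega), ht, bitf_eq _ (by omega)]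
        rfl
    · rintro d ⟨hv, hn, hmatch⟩
      refine ⟨⟨V_cpl hv, ?_⟩, ?_⟩
      · rw [bitf_cpl _ (show n + 1 < n + 2 by omega),
          hmatch (n+1) (by omega) (by omega), bitf_eq _ (by omega)]
        rfl
      · rw [bitf_cpl _ (show n < n + 2 by omega), hn]
        simp

lemma Fc_run (x i : ℕ) : Fc x i = ∑ j ∈ Finset.Icc (i - x) i, Fc x (j - x) := by
  induction i with
  | zero => simp [Fc_zero]
  | succ i ih =>
    rw [Fc_rec, ih]
    rcases le_or_gt (i+1) x with h | h
    · rw [show i + 1 - x = 0 by omega, show i - x = 0 by omega] at *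
      rw [Finset.sum_Icc_succ_top (show (0:ℕ) ≤ i + 1 by omega),
        show i + 1 - x = 0 by omega]
    · rw [show i + 1 - x = (i - x) + 1 by omega]
      rw [Finset.sum_Icc_succ_top (show i - x + 1 ≤ i + 1 by omega)]
      have hins : Finset.Icc (i-x) i = insert (i-x) (Finset.Icc (i-x+1) i) := by
        ext a
        simp only [Finset.mem_Icc, Finset.mem_insert]
        omega
      rw [hins, Finset.sum_insert (by simp only [Finset.mem_Icc]; omega)]
      have hr := Fc_rec x (i-x)
      rw [show i + 1 - x = i - x + 1 by omega, hr]
      omega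

/-- `N(m, x)`: the cardinality of the LOCO code `C(m, x)`. -/
noncomputable def locoN (m x : ℕ) : ℕ := Nat.card {c : Fin m → Bool // noForbidden m x c}

/-- `N(k, x)` extended to integer `k` by the convention `N(k, x) = 2` for `k ≤ 1`. -/
noncomputable def Nex (k : ℤ) (x : ℕ) : ℤ := if k ≤ 1 then 2 else (locoN k.toNat x : ℤ)

/-- Strict lexicographic order on binary words, comparing bits from `c_{m-1}`
(most significant) down to `c_0`, with `0 < 1`. -/
def lexLt (m : ℕ) (d c : Fin m → Bool) : Prop :=
  ∃ i : Fin m, d i = false ∧ c i = true ∧ ∀ j : Fin m, (i : ℕ) < (j : ℕ) → d j = c j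

/-- The index `g(m, x, c)` of a codeword: the number of codewords of `C(m, x)` that
precede `c` in lexicographic order. -/
noncomputable def locoIdx (m x : ℕ) (c : Fin m → Bool) : ℕ :=
  Nat.card {d : Fin m → Bool // noForbidden m x d ∧ lexLt m d c}

lemma locoN_eq (m x : ℕ) :
    locoN m x = (Finset.univ.filter (fun d : Fin m → Bool => V x m (bitf m d))).card := by
  unfold locoN
  rw [Nat.card_congr (Equiv.subtypeEquivRight (fun c => noForbidden_iff_V c))]
  exact ncard_filter _

lemma locoN_succ (x n : ℕ) : locoN (n+1) x = 2 * Fc x n := by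
  rw [locoN_eq]; exact codes_card x n

lemma locoIdx_eq (m x : ℕ) (c : Fin m → Bool) :
    locoIdx m x c = (Finset.univ.filter
      (fun d : Fin m → Bool => V x m (bitf m d) ∧ lexLt m d c)).card := by
  unfold locoIdx
  rw [Nat.card_congr (Equiv.subtypeEquivRight
    (fun d => and_congr_left' (noForbidden_iff_V d)))]
  exact ncard_filter _

lemma lexLt_asymm {m : ℕ} {d c : Fin m → Bool} (h1 : lexLt m d c) (h2 : lexLt m c d) : False := by
  obtain ⟨i, hi1, hi2, hi3⟩ := h1
  obtain ⟨i', hi1', hi2', hi3'⟩ := h2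
  rcases lt_trichotomy (i : ℕ) (i' : ℕ) with h | h | h
  · rw [hi3 i' h, hi1'] at hi2'; exact Bool.noConfusion hi2'
  · have : i = i' := Fin.ext h
    rw [this, hi1'] at hi2; exact Bool.noConfusion hi2
  · rw [hi3' i h, hi1] at hi2; exact Bool.noConfusion hi2

lemma lexLt_irrefl {m : ℕ} {c : Fin m → Bool} (h : lexLt m c c) : False := by
  obtain ⟨i, h1, h2, -⟩ := h
  rw [h1] at h2; exact Bool.noConfusion h2

lemma lexLt_total {m : ℕ} {d c : Fin m → Bool} (h : d ≠ c) : lexLt m d c ∨ lexLt m c d := by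
  have hne : (Finset.univ.filter (fun j : Fin m => d j ≠ c j)).Nonempty := by
    rw [Finset.filter_nonempty_iff]
    by_contra hx
    push_neg at hx
    exact h (funext fun j => hx j (Finset.mem_univ j))
  set i := (Finset.univ.filter (fun j : Fin m => d j ≠ c j)).max' hne with hidef
  have hmem := (Finset.univ.filter (fun j : Fin m => d j ≠ c j)).max'_mem hne
  rw [Finset.mem_filter] at hmem
  have hmax : ∀ j : Fin m, (i : ℕ) < (j : ℕ) → d j = c j := by
    intro j hj
    by_contra hne'
    have : j ≤ i := Finset.le_max' _ j (by simp [hne'])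
    have : (j : ℕ) ≤ (i : ℕ) := this
    omega
  rcases Bool.eq_false_or_eq_true (c i) with hci | hci
  · left
    refine ⟨i, ?_, hci, hmax⟩
    revert hmem hci; cases (d i) <;> cases (c i) <;> simp
  · right
    refine ⟨i, hci, ?_, fun j hj => (hmax j hj).symm⟩
    revert hmem hci; cases (d i) <;> cases (c i) <;> simp

lemma code_card_split (m x : ℕ) (c : Fin m → Bool) (hc : V x m (bitf m c)) :
    (Finset.univ.filter (fun d : Fin m → Bool => V x m (bitf m d))).card
      = (Finset.univ.filter (fun d => V x m (bitf m d) ∧ lexLt m d c)).card + 1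
        + (Finset.univ.filter (fun d => V x m (bitf m d) ∧ lexLt m c d)).card := by
  have hu : Finset.univ.filter (fun d : Fin m → Bool => V x m (bitf m d))
      = (Finset.univ.filter (fun d => V x m (bitf m d) ∧ lexLt m d c))
        ∪ ({c} ∪ (Finset.univ.filter (fun d => V x m (bitf m d) ∧ lexLt m c d))) := by
    ext d
    simp only [Finset.mem_filter, Finset.mem_univ, true_and, Finset.mem_union,
      Finset.mem_singleton]
    constructor
    · intro hv
      by_cases hdc : d = c
      · exact Or.inr (Or.inl hdc)
      · rcases lexLt_total hdc with h | h
        · exact Or.inl ⟨hv, h⟩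
        · exact Or.inr (Or.inr ⟨hv, h⟩)
    · rintro (⟨hv, -⟩ | rfl | ⟨hv, -⟩) <;> first | exact hv | exact hc
  rw [hu, Finset.card_union_of_disjoint, Finset.card_union_of_disjoint, Finset.card_singleton]
  · ring
  · rw [Finset.disjoint_left]
    intro a ha hb
    simp only [Finset.mem_singleton] at ha
    simp only [Finset.mem_filter, Finset.mem_univ, true_and] at hb
    subst ha
    exact lexLt_irrefl hb.2
  · rw [Finset.disjoint_left]
    intro a ha hb
    simp only [Finset.mem_filter, Finset.mem_univ, true_and] at ha
    simp only [Finset.mem_union, Finset.mem_singleton, Finset.mem_filter, Finset.mem_univ,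
      true_and] at hb
    rcases hb with rfl | hb
    · exact lexLt_irrefl ha.2
    · exact lexLt_asymm ha.2 hb.2

lemma gt_card (m x : ℕ) (c : Fin m → Bool) :
    (Finset.univ.filter (fun d : Fin m → Bool => V x m (bitf m d) ∧ lexLt m c d)).card
      = ∑ i ∈ (Finset.range m).filter (fun i => bitf m c i = false), Ec x m i c := by
  have hu : Finset.univ.filter (fun d : Fin m → Bool => V x m (bitf m d) ∧ lexLt m c d)
      = ((Finset.range m).filter (fun i => bitf m c i = false)).biUnion
          (fun i => Finset.univ.filter (EP x m i c)) := by
    ext d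
    simp only [Finset.mem_filter, Finset.mem_univ, true_and, Finset.mem_biUnion,
      Finset.mem_range, EP]
    constructor
    · rintro ⟨hv, i, hi1, hi2, hi3⟩
      refine ⟨(i : ℕ), ⟨i.isLt, by rw [bitf_eq _ i.isLt, Fin.eta]; exact hi1⟩, hv, ?_, ?_⟩
      · rw [bitf_eq _ i.isLt, Fin.eta]; exact hi2
      · intro j hj1 hj2
        rw [bitf_eq _ hj2, bitf_eq _ hj2]
        exact (hi3 ⟨j, hj2⟩ hj1).symm
    · rintro ⟨i, ⟨him, hci⟩, hv, hdi, hmatch⟩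
      refine ⟨hv, ⟨i, him⟩, ?_, ?_, ?_⟩
      · rw [← bitf_eq c him]; exact hci
      · rw [← bitf_eq d him]; exact hdi
      · intro j hj
        have := hmatch (j : ℕ) hj j.isLt
        rw [bitf_eq _ j.isLt, bitf_eq _ j.isLt] at this
        simp only [Fin.eta] at this
        exact this.symm
  rw [hu, Finset.card_biUnion]
  · exact Finset.sum_congr rfl (fun i _ => (Ec_eq x m i c).symm)
  · intro a ha b hb hab
    rw [Function.onFun, Finset.disjoint_left]
    intro d hd1 hd2
    simp only [Finset.mem_coe, Finset.mem_filter, Finset.mem_range] at ha hb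
    simp only [Finset.mem_filter, Finset.mem_univ, true_and, EP] at hd1 hd2
    rcases Nat.lt_or_ge a b with h | h
    · rw [hd1.2.2 b h hb.1, hb.2] at hd2
      exact Bool.noConfusion hd2.2.1
    · have h' : b < a := by omega
      rw [hd2.2.2 a h' ha.1, ha.2] at hd1
      exact Bool.noConfusion hd1.2.1

lemma run_sum {x m : ℕ} (c : Fin m → Bool) (hc : V x m (bitf m c)) (b istar : ℕ)
    (hbx : b ≤ istar - x) (him : istar + 1 < m)
    (hz : ∀ t, b ≤ t → t ≤ istar → bitf m c t = false)
    (ht : bitf m c (istar+1) = true) :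
    ∑ j ∈ Finset.Icc b istar, Ec x m j c = ∑ j ∈ Finset.Icc b istar, Fc x (j - x) := by
  have hbi : b ≤ istar := by omega
  have heval : ∀ j ∈ Finset.Icc b istar, Ec x m j c
      = if j = istar then Fc x istar else if j + x + 1 ≤ istar then Fc x (j - x) else 0 := by
    intro j hj
    rw [Finset.mem_Icc] at hj
    by_cases hji : j = istar
    · rw [if_pos hji, hji]
      exact Ec_top c him hc ht (Or.inl (hz istar hbi le_rfl))
    · rw [if_neg hji]
      have hjlt : j < istar := by omega
      by_cases hdeep : j + x + 1 ≤ istar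
      · rw [if_pos hdeep]
        exact Ec_deep c (by omega) hc
          (fun k hk1 hk2 hk3 => hz (j+k) (by omega) (by omega))
      · rw [if_neg hdeep]
        exact Ec_zero c (istar - j) (by omega) (by omega)
          (by omega)
          (fun k hk1 hk2 => hz (j+k) (by omega) (by omega))
          (by rw [show j + (istar - j) + 1 = istar + 1 by omega]; exact ht)
  rw [Finset.sum_congr rfl heval]
  have hsplit : Finset.Icc b istar
      = Finset.Ico b (istar - x) ∪ Finset.Icc (istar - x) istar := by
    ext a
    simp only [Finset.mem_Icc, Finset.mem_Ico, Finset.mem_union]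
    omega
  have hdisj : Disjoint (Finset.Ico b (istar - x)) (Finset.Icc (istar - x) istar) := by
    rw [Finset.disjoint_left]
    intro a ha hb'
    simp only [Finset.mem_Ico] at ha
    simp only [Finset.mem_Icc] at hb'
    omega
  rw [hsplit, Finset.sum_union hdisj, Finset.sum_union hdisj]
  congr 1
  · apply Finset.sum_congr rfl
    intro j hj
    rw [Finset.mem_Ico] at hj
    rw [if_neg (by omega), if_pos (by omega)]
  · have hl : ∑ j ∈ Finset.Icc (istar - x) istar,
        (if j = istar then Fc x istar else if j + x + 1 ≤ istar then Fc x (j - x) else 0)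
        = Fc x istar := by
      rw [Finset.sum_eq_single_of_mem istar (by simp only [Finset.mem_Icc]; omega)]
      · rw [if_pos rfl]
      · intro j hj hne
        rw [Finset.mem_Icc] at hj
        rw [if_neg hne, if_neg (by omega)]
    rw [hl, ← Fc_run]

lemma sum_run {x m : ℕ} (c : Fin m → Bool) (hc : V x m (bitf m c)) :
    ∀ n, n < m → bitf m c n = true →
      ∑ i ∈ (Finset.range n).filter (fun i => bitf m c i = false), Ec x m i c
        = ∑ i ∈ (Finset.range n).filter (fun i => bitf m c i = false), Fc x (i - x) := by
  intro n
  induction n using Nat.strong_induction_on with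
  | _ n ih =>
    intro hn htn
    by_cases hne : ((Finset.range n).filter (fun i => bitf m c i = false)).Nonempty
    · have hmem := Finset.mem_filter.mp (Finset.max'_mem _ hne)
      obtain ⟨hiltn', hizero⟩ := hmem
      have hiltn : ((Finset.range n).filter (fun i => bitf m c i = false)).max' hne < n :=
        Finset.mem_range.mp hiltn'
      generalize histar : ((Finset.range n).filter (fun i => bitf m c i = false)).max' hne = istar
        at hiltn hizero
      have hmaxtop : ∀ j, istar < j → j < n → bitf m c j = true := by
        intro j h1 h2
        by_contra hj
        have hj' : bitf m c j = false := by revert hj; cases (bitf m c j) <;> simp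
        have hle : j ≤ istar := by
          rw [← histar]
          exact Finset.le_max' _ j (Finset.mem_filter.mpr ⟨Finset.mem_range.mpr h2, hj'⟩)
        omega
      have htop1 : bitf m c (istar + 1) = true := by
        rcases Nat.eq_or_lt_of_le (show istar + 1 ≤ n by omega) with h | h
        · rw [h]; exact htn
        · exact hmaxtop (istar+1) (by omega) h
      by_cases h2 : ((Finset.range (istar+1)).filter (fun j => bitf m c j = true)).Nonempty
      · -- interior run : bottom g0+1 ≥ 1
        have hmem2 := Finset.mem_filter.mp (Finset.max'_mem _ h2)
        obtain ⟨hg0lt', hg0t⟩ := hmem2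
        have hg0lt : ((Finset.range (istar+1)).filter (fun j => bitf m c j = true)).max' h2
            < istar + 1 := Finset.mem_range.mp hg0lt'
        generalize hg0d :
          ((Finset.range (istar+1)).filter (fun j => bitf m c j = true)).max' h2 = g0
          at hg0lt hg0t
        have hg0ne : g0 ≠ istar := by
          intro h
          rw [h, hizero] at hg0t
          exact Bool.noConfusion hg0t
        have hrunzero : ∀ t, g0 + 1 ≤ t → t ≤ istar → bitf m c t = false := by
          intro t h1' h2'
          by_contra hj
          have hj' : bitf m c t = true := by revert hj; cases (bitf m c t) <;> simp
          have hle : t ≤ g0 := by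
            rw [← hg0d]
            exact Finset.le_max' _ t
              (Finset.mem_filter.mpr ⟨Finset.mem_range.mpr (by omega), hj'⟩)
          omega
        have hdeep : g0 + 1 + x ≤ istar := by
          by_contra hcon
          have hflip : bitf m c g0 ≠ bitf m c (g0+1) := by
            rw [hg0t, hrunzero (g0+1) le_rfl (by omega)]; simp
          have hv := hc g0 (istar - g0) (by omega) (by omega) (by omega) hflip
          rw [show g0 + 1 + (istar - g0) = istar + 1 by omega, htop1,
            hrunzero (g0+1) le_rfl (by omega)] at hv
          exact Bool.noConfusion hv
        have hsplitset : (Finset.range n).filter (fun i => bitf m c i = false)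
            = ((Finset.range g0).filter (fun i => bitf m c i = false))
              ∪ Finset.Icc (g0+1) istar := by
          ext a
          simp only [Finset.mem_filter, Finset.mem_range, Finset.mem_union, Finset.mem_Icc]
          constructor
          · rintro ⟨h1', h2'⟩
            rcases le_or_gt a istar with ha | ha
            · rcases lt_or_ge a g0 with hb' | hb'
              · exact Or.inl ⟨hb', h2'⟩
              · rcases Nat.eq_or_lt_of_le hb' with hb'' | hb''
                · rw [← hb'', hg0t] at h2'
                  exact Bool.noConfusion h2'
                · exact Or.inr ⟨by omega, ha⟩
            · rw [hmaxtop a ha h1'] at h2'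
              exact Bool.noConfusion h2'
          · rintro (⟨h1', h2'⟩ | ⟨h1', h2'⟩)
            · exact ⟨by omega, h2'⟩
            · exact ⟨by omega, hrunzero a h1' h2'⟩
        have hdisj : Disjoint ((Finset.range g0).filter (fun i => bitf m c i = false))
            (Finset.Icc (g0+1) istar) := by
          rw [Finset.disjoint_left]
          intro a ha hb'
          simp only [Finset.mem_filter, Finset.mem_range] at ha
          simp only [Finset.mem_Icc] at hb'
          omega
        rw [hsplitset, Finset.sum_union hdisj, Finset.sum_union hdisj,
          ih g0 (by omega) (by omega) hg0t,
          run_sum c hc (g0+1) istar (by omega) (by omega) hrunzero htop1]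
      · -- run reaching the bottom : b = 0
        have hrunzero : ∀ t, 0 ≤ t → t ≤ istar → bitf m c t = false := by
          intro t _ h2'
          by_contra hj
          have hj' : bitf m c t = true := by revert hj; cases (bitf m c t) <;> simp
          exact h2 ⟨t, Finset.mem_filter.mpr ⟨Finset.mem_range.mpr (by omega), hj'⟩⟩
        have hsplitset : (Finset.range n).filter (fun i => bitf m c i = false)
            = Finset.Icc 0 istar := by
          ext a
          simp only [Finset.mem_filter, Finset.mem_range, Finset.mem_Icc]
          constructor
          · rintro ⟨h1', h2'⟩
            rcases le_or_gt a istar with ha | ha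
            · exact ⟨by omega, ha⟩
            · rw [hmaxtop a ha h1'] at h2'
              exact Bool.noConfusion h2'
          · rintro ⟨-, h2'⟩
            exact ⟨by omega, hrunzero a (by omega) h2'⟩
        rw [hsplitset]
        exact run_sum c hc 0 istar (by omega) (by omega) hrunzero htop1
    · rw [Finset.not_nonempty_iff_eq_empty] at hne
      rw [hne, Finset.sum_empty, Finset.sum_empty]

lemma Nex_eq (x i : ℕ) : Nex ((i : ℤ) - (x : ℤ) + 1) x = 2 * (Fc x (i - x) : ℤ) := by
  unfold Nex
  by_cases h : i ≤ x
  · rw [if_pos (by omega), show i - x = 0 by omega, Fc_zero]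
    norm_num
  · rw [if_neg (by omega), show ((i : ℤ) - (x : ℤ) + 1).toNat = (i - x) + 1 by omega,
      locoN_succ]
    push_cast
    ring

/-- For all `m ≥ 2`, `x ≥ 1` and every codeword `c ∈ C(m, x)` with leftmost
bit `c_{m-1} = 1`, the balanced index `g^b(c) = N(m, x) - 1 - g(c)` satisfies
`2 g^b(c) = Σ_{i=0}^{m-2} N(i - x + 1, x) · [c_i = 0]`, where any term `N(k, x)` with `k ≤ 1`
is interpreted, by convention, as `2`. -/
theorem loco_balanced_index_formula (m x : ℕ) (hm : 2 ≤ m) (hx : 1 ≤ x)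
    (c : Fin m → Bool) (hc : noForbidden m x c)
    (h0 : c ⟨m - 1, by omega⟩ = true) :
    2 * ((locoN m x : ℤ) - 1 - (locoIdx m x c : ℤ))
      = ∑ i : Fin (m - 1),
          if c (Fin.castLE (by omega) i) = false then
            Nex (((i : ℕ) : ℤ) - (x : ℤ) + 1) x
          else 0 := by
  have hcV : V x m (bitf m c) := (noForbidden_iff_V c).mp hc
  have htopb : bitf m c (m-1) = true := by rw [bitf_eq _ (by omega)]; exact h0
  have hcount : locoN m x = locoIdx m x c + 1
      + ∑ i ∈ (Finset.range (m-1)).filter (fun i => bitf m c i = false), Fc x (i - x) := by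
    rw [locoN_eq, locoIdx_eq, code_card_split m x c hcV]
    congr 1
    rw [gt_card m x c]
    have hrange : (Finset.range m).filter (fun i => bitf m c i = false)
        = (Finset.range (m-1)).filter (fun i => bitf m c i = false) := by
      ext a
      simp only [Finset.mem_filter, Finset.mem_range]
      constructor
      · rintro ⟨h1, h2⟩
        refine ⟨?_, h2⟩
        rcases Nat.lt_or_ge a (m-1) with h' | h'
        · exact h'
        · have : a = m - 1 := by omega
          rw [this, htopb] at h2
          exact Bool.noConfusion h2
      · rintro ⟨h1, h2⟩
        exact ⟨by omega, h2⟩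
    rw [hrange]
    exact sum_run c hcV (m-1) (by omega) htopb
  have hL : 2 * ((locoN m x : ℤ) - 1 - (locoIdx m x c : ℤ))
      = 2 * (∑ i ∈ (Finset.range (m-1)).filter (fun i => bitf m c i = false),
          (Fc x (i - x) : ℤ)) := by
    rw [hcount]
    push_cast
    ring
  rw [hL]
  have hR : ∑ i : Fin (m - 1),
      (if c (Fin.castLE (by omega : m - 1 ≤ m) i) = false then
        Nex (((i : ℕ) : ℤ) - (x : ℤ) + 1) x else 0)
      = ∑ j ∈ Finset.range (m-1),
          (if bitf m c j = false then 2 * (Fc x (j - x) : ℤ) else 0) := by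
    rw [← Fin.sum_univ_eq_sum_range
      (fun j => if bitf m c j = false then 2 * (Fc x (j - x) : ℤ) else 0) (m-1)]
    apply Finset.sum_congr rfl
    intro i _
    have hcoe : c (Fin.castLE (by omega : m - 1 ≤ m) i) = bitf m c (i : ℕ) := by
      rw [bitf_eq _ (show (i : ℕ) < m by omega)]
      rfl
    rw [hcoe, Nex_eq]
  rw [hR, ← Finset.sum_filter, Finset.mul_sum]
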